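/- For every increasing chain (f_n)_{n<ω} of functions in ℕ → ℕ ordered pointwise (f ≤ g iff f(n) ≤ g(n) for all n, with f < g iff f ≤ g and f ≠ g) there exists a family (f^α_n) of functions ℕ → ℕ, indexed by α < ω₁ and n < ω, such that: for each α < ω₁, (f^α_n)_{n<ω} is an increasing chain in (ℕ → ℕ, ≤); for all α < β < ω₁, (f^α_n)_{n<ω} ⊑ (f^β_n)_{n<ω} and not (f^β_n)_{n<ω} ⊑ (f^α_n)_{n<ω}; and (f_n)_{n<ω} ⊑ (f^0_n)_{n<ω}. -/

import Mathlib

open Classical in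
/-- For countably many constraints indexed by `β < α` and `m : ℕ`, there exists a
function `G : ℕ → ℕ`, everywhere `≥ 1`, eventually dominating `f m + m * IH β`. -/
lemma exists_dom (f : ℕ → ℕ → ℕ) (α : Ordinal.{0}) (hc : (Set.Iio α).Countable)
    (IH : ∀ β, β < α → ℕ → ℕ) :
    ∃ G : ℕ → ℕ, (∀ k, 1 ≤ G k) ∧
      ∀ β (h : β < α) (m : ℕ), ∃ N, ∀ k, N ≤ k → f m k + m * IH β h k < G k := by
  rcases (Set.Iio α).eq_empty_or_nonempty with he | hne
  · refine ⟨fun _ => 1, fun _ => le_rfl, fun β h m => ?_⟩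
    exact absurd (Set.mem_Iio.mpr h) (he ▸ Set.notMem_empty β)
  · haveI : Countable (Set.Iio α) := hc.to_subtype
    haveI : Nonempty (Set.Iio α) := hne.to_subtype
    obtain ⟨e, he⟩ := exists_surjective_nat ((Set.Iio α) × ℕ)
    set h : ℕ → ℕ → ℕ := fun i k => f (e i).2 k + (e i).2 * IH (e i).1 (e i).1.2 k with hh
    refine ⟨fun k => 1 + (Finset.range (k + 1)).sup (fun j => h j k),
      fun k => Nat.le_add_right 1 _, fun β hβ m => ?_⟩
    obtain ⟨i, hi⟩ := he (⟨⟨β, hβ⟩, m⟩)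
    refine ⟨i, fun k hk => ?_⟩
    have h1 : f m k + m * IH β hβ k = h i k := by
      rw [hh]; simp only [hi]
    have h2 : h i k ≤ (Finset.range (k + 1)).sup (fun j => h j k) :=
      Finset.le_sup (f := fun j => h j k) (Finset.mem_range.mpr (Nat.lt_succ_of_le hk))
    dsimp only
    omega

open Classical in
noncomputable def gfun (f : ℕ → ℕ → ℕ) : Ordinal.{0} → ℕ → ℕ :=
  Ordinal.lt_wf.fix fun α IH =>
    if hc : (Set.Iio α).Countable then
      Classical.choose (exists_dom f α hc (fun β h => IH β h))
    else fun _ => 1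

open Classical in
lemma gfun_eq (f : ℕ → ℕ → ℕ) (α : Ordinal.{0}) :
    gfun f α =
      if hc : (Set.Iio α).Countable then
        Classical.choose (exists_dom f α hc (fun β _ => gfun f β))
      else fun _ => 1 := by
  rw [gfun, WellFounded.fix_eq]

open Classical in
lemma gfun_pos (f : ℕ → ℕ → ℕ) (α : Ordinal.{0}) (k : ℕ) : 1 ≤ gfun f α k := by
  rw [gfun_eq]
  split
  · exact (Classical.choose_spec (exists_dom f α ‹_› _)).1 k
  · exact le_rfl

open Classical in
lemma gfun_dom (f : ℕ → ℕ → ℕ) {α : Ordinal.{0}} (hc : (Set.Iio α).Countable)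
    {β : Ordinal.{0}} (hβ : β < α) (m : ℕ) :
    ∃ N, ∀ k, N ≤ k → f m k + m * gfun f β k < gfun f α k := by
  have := (Classical.choose_spec (exists_dom f α hc (fun β _ => gfun f β))).2 β hβ m
  rw [gfun_eq f α]
  simpa [hc] using this

lemma countable_Iio_of_lt_ord {α : Ordinal.{0}} (hα : α < (Cardinal.aleph 1).ord) :
    (Set.Iio α).Countable := by
  rw [Cardinal.countable_iff_lt_aleph_one, Ordinal.mk_Iio_ordinal,
    Cardinal.lift_lt_aleph_one]
  exact Cardinal.lt_ord.mp hα

/-- for every increasing chain `(f_n)_{n<ω}` in `(ℕ → ℕ, ≤)` (pointwise order,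
with `f < g` iff `f ≤ g` and `f ≠ g`) there exists a family `(f^α_n)` indexed by `α < ω₁` and
`n < ω` such that each `(f^α_n)_{n<ω}` is an increasing chain, `α < β < ω₁` implies
`(f^α_n)_{n<ω} ⊑ (f^β_n)_{n<ω}` and not conversely, and `(f_n)_{n<ω} ⊑ (f^0_n)_{n<ω}`. -/
theorem stmt8 (f : ℕ → ℕ → ℕ) (hf : ∀ n m : ℕ, n < m → f n < f m) :
    ∃ F : (α : Ordinal.{0}) → α < (Cardinal.aleph 1).ord → ℕ → ℕ → ℕ,
      -- each `(f^α_n)_{n<ω}` is an increasing chain in `(ℕ → ℕ, ≤)`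
      (∀ (α : Ordinal.{0}) (hα : α < (Cardinal.aleph 1).ord) (n m : ℕ), n < m →
        F α hα n < F α hα m) ∧
      -- `α < β` implies `(f^α_n)_{n<ω} ⊑ (f^β_n)_{n<ω}` and not `(f^β_n)_{n<ω} ⊑ (f^α_n)_{n<ω}`
      (∀ (α β : Ordinal.{0}) (hα : α < (Cardinal.aleph 1).ord)
          (hβ : β < (Cardinal.aleph 1).ord), α < β →
        (∀ n : ℕ, ∃ m : ℕ, F α hα n ≤ F β hβ m) ∧
        ¬ (∀ n : ℕ, ∃ m : ℕ, F β hβ n ≤ F α hα m)) ∧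
      -- `(f_n)_{n<ω} ⊑ (f^0_n)_{n<ω}`
      (∀ h0 : (0 : Ordinal.{0}) < (Cardinal.aleph 1).ord,
        ∀ n : ℕ, ∃ m : ℕ, f n ≤ F 0 h0 m) := by
  refine ⟨fun α _ n k => f n k + n * gfun f α k, ?_, ?_, ?_⟩
  · intro α hα n m hnm
    have hlt := hf n m hnm
    rw [Pi.lt_def] at hlt ⊢
    obtain ⟨hle, i, hi⟩ := hlt
    refine ⟨fun k => ?_, i, ?_⟩
    · dsimp only
      have h1 : f n k ≤ f m k := hle k
      have h2 : n * gfun f α k ≤ m * gfun f α k :=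
        Nat.mul_le_mul_right _ (le_of_lt hnm)
      omega
    · dsimp only
      have h2 : n * gfun f α i ≤ m * gfun f α i :=
        Nat.mul_le_mul_right _ (le_of_lt hnm)
      omega
  · intro α β hα hβ hαβ
    have hcβ := countable_Iio_of_lt_ord hβ
    constructor
    · intro n
      obtain ⟨N, hN⟩ := gfun_dom f hcβ hαβ n
      set M := (Finset.range N).sup (fun k => f n k + n * gfun f α k) with hM
      refine ⟨max 1 M, fun k => ?_⟩
      rcases lt_or_ge k N with hk | hk
      · have h1 : f n k + n * gfun f α k ≤ M := by
          rw [hM]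
          exact Finset.le_sup (f := fun k => f n k + n * gfun f α k)
            (Finset.mem_range.mpr hk)
        have h2 : max 1 M ≤ max 1 M * gfun f β k :=
          Nat.le_mul_of_pos_right _ (gfun_pos f β k)
        have h3 : M ≤ max 1 M := le_max_right 1 M
        dsimp only
        omega
      · have h1 := hN k hk
        have h2 : gfun f β k ≤ max 1 M * gfun f β k :=
          Nat.le_mul_of_pos_left _ (lt_of_lt_of_le Nat.one_pos (le_max_left 1 M))
        dsimp only
        omega
    · intro hcon
      obtain ⟨m, hm⟩ := hcon 1
      obtain ⟨N, hN⟩ := gfun_dom f hcβ hαβ m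
      have h1 := hm N
      have h2 := hN N le_rfl
      dsimp only at h1
      omega
  · intro h0 n
    exact ⟨n, fun k => Nat.le_add_right _ _⟩
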